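/- For k > 0 with k ≠ 1, the three-element Wronskian W(x + x^{2k-1}, (x + x^{2k-1}) arctan(x^{k-1}), x^k)(x) equals -4(k-1)^3 x^{4k-2} / (x^2 + x^{2k}) for x > 0, and in particular is nonvanishing on (0, ∞). -/

import Mathlib

open Real

private lemma hdf (k : ℝ) {x : ℝ} (hx : 0 < x) :
    HasDerivAt (fun y : ℝ => y + y ^ (2 * k - 1)) (1 + (2 * k - 1) * x ^ (2 * k - 2)) x := by
  have h := (hasDerivAt_id x).add
    (Real.hasDerivAt_rpow_const (x := x) (p := 2 * k - 1) (Or.inl hx.ne'))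
  rw [show (2 * k - 1 - 1 : ℝ) = 2 * k - 2 by ring] at h
  exact h

private lemma hdh (k : ℝ) {x : ℝ} (hx : 0 < x) :
    HasDerivAt (fun y : ℝ => y ^ k) (k * x ^ (k - 1)) x :=
  Real.hasDerivAt_rpow_const (Or.inl hx.ne')

private lemma hda (k : ℝ) {x : ℝ} (hx : 0 < x) :
    HasDerivAt (fun y : ℝ => arctan (y ^ (k - 1)))
      (1 / (1 + (x ^ (k - 1)) ^ 2) * ((k - 1) * x ^ (k - 2))) x := by
  have h := (Real.hasDerivAt_rpow_const (x := x) (p := k - 1) (Or.inl hx.ne')).arctan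
  simpa [show (k - 1 - 1 : ℝ) = k - 2 by ring] using h

private lemma key_simp (k : ℝ) {y : ℝ} (hy : 0 < y) :
    (y + y ^ (2 * k - 1)) * (1 / (1 + (y ^ (k - 1)) ^ 2) * ((k - 1) * y ^ (k - 2)))
      = (k - 1) * y ^ (k - 1) := by
  have e1 : y ^ (2 * k - 1) = y ^ (k - 1) * (y ^ (k - 1) * y) := by
    rw [show (2 * k - 1 : ℝ) = (k - 1) + ((k - 1) + 1) by ring, Real.rpow_add hy,
      Real.rpow_add hy, Real.rpow_one]
  have e2 : y ^ (k - 2) = y ^ (k - 1) / y := by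
    rw [show (k - 2 : ℝ) = k - 1 - 1 by ring, Real.rpow_sub hy, Real.rpow_one]
  have hv : (0:ℝ) < 1 + (y ^ (k - 1)) ^ 2 := by positivity
  rw [e1, e2]
  field_simp

private lemma hdg (k : ℝ) {x : ℝ} (hx : 0 < x) :
    HasDerivAt (fun y : ℝ => (y + y ^ (2 * k - 1)) * arctan (y ^ (k - 1)))
      ((1 + (2 * k - 1) * x ^ (2 * k - 2)) * arctan (x ^ (k - 1)) + (k - 1) * x ^ (k - 1)) x := by
  have h := (hdf k hx).mul (hda k hx)
  rwa [key_simp k hx] at h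

/-- second derivative of the first column function -/
private lemma hdf2 (k : ℝ) {x : ℝ} (hx : 0 < x) :
    HasDerivAt (fun y : ℝ => 1 + (2 * k - 1) * y ^ (2 * k - 2))
      ((2 * k - 1) * ((2 * k - 2) * x ^ (2 * k - 3))) x := by
  have h := ((Real.hasDerivAt_rpow_const (x := x) (p := 2 * k - 2)
    (Or.inl hx.ne')).const_mul (2 * k - 1)).const_add 1
  simpa [show (2 * k - 2 - 1 : ℝ) = 2 * k - 3 by ring] using h

private lemma hdh2 (k : ℝ) {x : ℝ} (hx : 0 < x) :
    HasDerivAt (fun y : ℝ => k * y ^ (k - 1)) (k * ((k - 1) * x ^ (k - 2))) x := by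
  have h := (Real.hasDerivAt_rpow_const (x := x) (p := k - 1) (Or.inl hx.ne')).const_mul k
  simpa [show (k - 1 - 1 : ℝ) = k - 2 by ring] using h

private lemma hdg2 (k : ℝ) {x : ℝ} (hx : 0 < x) :
    HasDerivAt (fun y : ℝ =>
        (1 + (2 * k - 1) * y ^ (2 * k - 2)) * arctan (y ^ (k - 1)) + (k - 1) * y ^ (k - 1))
      ((2 * k - 1) * ((2 * k - 2) * x ^ (2 * k - 3)) * arctan (x ^ (k - 1))
        + (1 + (2 * k - 1) * x ^ (2 * k - 2))
            * (1 / (1 + (x ^ (k - 1)) ^ 2) * ((k - 1) * x ^ (k - 2)))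
        + (k - 1) * ((k - 1) * x ^ (k - 2))) x := by
  have h1 := (Real.hasDerivAt_rpow_const (x := x) (p := k - 1)
    (Or.inl hx.ne')).const_mul (k - 1)
  have h2 : HasDerivAt (fun y : ℝ => (k - 1) * y ^ (k - 1))
      ((k - 1) * ((k - 1) * x ^ (k - 2))) x := by
    simpa [show (k - 1 - 1 : ℝ) = k - 2 by ring] using h1
  exact ((hdf2 k hx).mul (hda k hx)).add h2

theorem stmt_10 (k : ℝ) (hk : 0 < k) (hk1 : k ≠ 1) (x : ℝ) (hx : 0 < x) :
    Matrix.det (fun i j : Fin 3 =>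
        deriv^[i.val]
          (![fun y : ℝ => y + y ^ (2 * k - 1),
             fun y : ℝ => (y + y ^ (2 * k - 1)) * arctan (y ^ (k - 1)),
             fun y : ℝ => y ^ k] j) x)
      = -4 * (k - 1) ^ 3 * x ^ (4 * k - 2) / (x ^ (2 : ℝ) + x ^ (2 * k)) ∧
    -4 * (k - 1) ^ 3 * x ^ (4 * k - 2) / (x ^ (2 : ℝ) + x ^ (2 * k)) ≠ 0 := by
  have hmem : Set.Ioi (0:ℝ) ∈ nhds x := isOpen_Ioi.mem_nhds hx
  -- first derivatives as functions on the neighborhood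
  have d1f : deriv (fun y : ℝ => y + y ^ (2 * k - 1)) x = 1 + (2 * k - 1) * x ^ (2 * k - 2) :=
    (hdf k hx).deriv
  have d1g : deriv (fun y : ℝ => (y + y ^ (2 * k - 1)) * arctan (y ^ (k - 1))) x
      = (1 + (2 * k - 1) * x ^ (2 * k - 2)) * arctan (x ^ (k - 1)) + (k - 1) * x ^ (k - 1) :=
    (hdg k hx).deriv
  have d1h : deriv (fun y : ℝ => y ^ k) x = k * x ^ (k - 1) := (hdh k hx).deriv
  -- second derivatives
  have d2f : deriv (deriv (fun y : ℝ => y + y ^ (2 * k - 1))) x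
      = (2 * k - 1) * ((2 * k - 2) * x ^ (2 * k - 3)) := by
    have hev : deriv (fun y : ℝ => y + y ^ (2 * k - 1))
        =ᶠ[nhds x] fun y => 1 + (2 * k - 1) * y ^ (2 * k - 2) :=
      Filter.eventuallyEq_of_mem hmem fun y hy => (hdf k hy).deriv
    rw [hev.deriv_eq]
    exact (hdf2 k hx).deriv
  have d2g : deriv (deriv (fun y : ℝ => (y + y ^ (2 * k - 1)) * arctan (y ^ (k - 1)))) x
      = (2 * k - 1) * ((2 * k - 2) * x ^ (2 * k - 3)) * arctan (x ^ (k - 1))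
        + (1 + (2 * k - 1) * x ^ (2 * k - 2))
            * (1 / (1 + (x ^ (k - 1)) ^ 2) * ((k - 1) * x ^ (k - 2)))
        + (k - 1) * ((k - 1) * x ^ (k - 2)) := by
    have hev : deriv (fun y : ℝ => (y + y ^ (2 * k - 1)) * arctan (y ^ (k - 1)))
        =ᶠ[nhds x] fun y =>
          (1 + (2 * k - 1) * y ^ (2 * k - 2)) * arctan (y ^ (k - 1)) + (k - 1) * y ^ (k - 1) :=
      Filter.eventuallyEq_of_mem hmem fun y hy => (hdg k hy).deriv
    rw [hev.deriv_eq]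
    exact (hdg2 k hx).deriv
  have d2h : deriv (deriv (fun y : ℝ => y ^ k)) x = k * ((k - 1) * x ^ (k - 2)) := by
    have hev : deriv (fun y : ℝ => y ^ k) =ᶠ[nhds x] fun y => k * y ^ (k - 1) :=
      Filter.eventuallyEq_of_mem hmem fun y hy => (hdh k hy).deriv
    rw [hev.deriv_eq]
    exact (hdh2 k hx).deriv
  constructor
  · refine (Matrix.det_fin_three _).trans ?_
    simp only [Matrix.cons_val', Matrix.cons_val_zero, Matrix.cons_val_one, Matrix.head_cons,
      Matrix.cons_val_two, Matrix.tail_cons, Matrix.head_fin_const, Fin.val_zero, Fin.val_one,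
      Fin.val_two, Function.iterate_zero, Function.iterate_one, Function.iterate_succ,
      Function.comp_apply, id_eq, Function.iterate_zero_apply]
    rw [d1f, d1g, d1h, d2f, d2g, d2h]
    rw [show (2 * k - 1 : ℝ) = k + k - 1 by ring, show (2 * k - 2 : ℝ) = k + k - (1 + 1) by ring,
      show (2 * k - 3 : ℝ) = k + k - (1 + 1 + 1) by ring,
      show (4 * k - 2 : ℝ) = k + k + k + k - (1 + 1) by ring,
      show (2 * k : ℝ) = k + k by ring, show (2 : ℝ) = 1 + 1 by norm_num]
    simp only [Real.rpow_add hx, Real.rpow_sub hx, Real.rpow_one]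
    set u := x ^ k with hu
    have hu0 : 0 < u := Real.rpow_pos_of_pos hx k
    have hd : (0:ℝ) < 1 + (u / x) ^ 2 := by positivity
    have hden : (0:ℝ) < x * x + u * u := by positivity
    set A := arctan (u / x) with hA
    field_simp
    ring
  · have hnum : -4 * (k - 1) ^ 3 * x ^ (4 * k - 2) ≠ 0 := by
      have := Real.rpow_pos_of_pos hx (4 * k - 2)
      have hk1' : k - 1 ≠ 0 := sub_ne_zero.mpr hk1
      positivity
    have hden : x ^ (2 : ℝ) + x ^ (2 * k) ≠ 0 := by
      have h1 := Real.rpow_pos_of_pos hx (2 : ℝ)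
      have h2 := Real.rpow_pos_of_pos hx (2 * k)
      positivity
    exact div_ne_zero hnum hden
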